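/- Let ρ : ℝ → [0,∞) be measurable with ∫_ℝ ρ(x) dx = 1, and suppose h : [0,1] → [0,∞) satisfies ∫_ℝ min{ρ(x), h(s)} dx = s for every s ∈ [0,1]. Let Φ : [0,∞) → ℝ be continuously differentiable with Φ(0) = 0. Then ∫_ℝ Φ(ρ(x)) dx = ∫_0^1 Φ'(h(s)) ds. -/

import Mathlib

open MeasureTheory Set

private lemma aux_ftc (Φ ψ : ℝ → ℝ) (hψ : Continuous ψ)
    (hd : ∀ x ∈ Ici (0:ℝ), HasDerivWithinAt Φ (ψ x) (Ici 0) x)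
    (b : ℝ) (hb : 0 ≤ b) :
    ∫ t in (0:ℝ)..b, ψ t = Φ b - Φ 0 := by
  refine intervalIntegral.integral_eq_sub_of_hasDeriv_right_of_le hb ?_ ?_
    (hψ.intervalIntegrable _ _)
  · intro x hx
    exact ((hd x hx.1).continuousWithinAt).mono (Icc_subset_Ici_self)
  · intro x hx
    exact (((hd x hx.1.le).hasDerivAt (Ici_mem_nhds hx.1)).hasDerivWithinAt)

private lemma aux_fub (ρ : ℝ → ℝ) (hρm : Measurable ρ) (hρnn : ∀ x, 0 ≤ ρ x)
    (hρint : Integrable ρ) (τ : ℝ) (hτ : 0 ≤ τ) (ψ : ℝ → ℝ) (hψ : Continuous ψ) :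
    IntegrableOn (fun t => ψ t * (volume {x | t < ρ x}).toReal) (Ioc 0 τ) ∧
    (∫ x : ℝ, ∫ t in (0:ℝ)..(min (ρ x) τ), ψ t) =
      ∫ t in Ioc (0:ℝ) τ, ψ t * (volume {x | t < ρ x}).toReal := by
  set g : ℝ → ℝ := fun x => min (ρ x) τ with hgdef
  have hg_m : Measurable g := hρm.min measurable_const
  have hg_nn : ∀ x, 0 ≤ g x := fun x => le_min (hρnn x) hτ
  have hg_le : ∀ x, g x ≤ τ := fun x => min_le_right _ _
  have hg_int : Integrable g := by
    refine hρint.mono hg_m.aestronglyMeasurable (ae_of_all _ fun x => ?_)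
    rw [Real.norm_eq_abs, Real.norm_eq_abs, abs_of_nonneg (hg_nn x), abs_of_nonneg (hρnn x)]
    exact min_le_left _ _
  obtain ⟨F, hFdef⟩ : ∃ F : ℝ → ℝ → ℝ, F = fun x t => (Ioo (0:ℝ) (g x)).indicator ψ t :=
    ⟨_, rfl⟩
  obtain ⟨S, hSdef⟩ :
      ∃ S : Set (ℝ × ℝ), S = {p : ℝ × ℝ | 0 < p.2} ∩ {p : ℝ × ℝ | p.2 < g p.1} :=
    ⟨_, rfl⟩
  have hS : MeasurableSet S := by
    rw [hSdef]
    exact (measurableSet_lt measurable_const measurable_snd).inter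
      (measurableSet_lt measurable_snd (hg_m.comp measurable_fst))
  have hmemS : ∀ p : ℝ × ℝ, p ∈ S ↔ (0 < p.2 ∧ p.2 < g p.1) := by
    intro p
    rw [hSdef]
    exact Iff.rfl
  have hFeq : Function.uncurry F = S.indicator (fun p => ψ p.2) := by
    ext p
    simp only [Function.uncurry, hFdef]
    by_cases hp : p ∈ S
    · rw [Set.indicator_of_mem hp,
        Set.indicator_of_mem (Set.mem_Ioo.2 ((hmemS p).1 hp))]
    · rw [Set.indicator_of_notMem hp, Set.indicator_of_notMem
        (fun hmem => hp ((hmemS p).2 (Set.mem_Ioo.1 hmem)))]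
  -- finiteness of the region
  have hSregion : S = regionBetween (fun _ => (0:ℝ)) g univ := by
    rw [hSdef]
    ext p
    simp [regionBetween, Set.mem_Ioo, and_comm]
  have hvolS : (volume.prod volume) S < ⊤ := by
    rw [hSregion, volume_regionBetween_eq_integral
      ((integrableOn_const_iff (C := (0:ℝ)) enorm_ne_top).2 (Or.inl enorm_zero)) hg_int.integrableOn MeasurableSet.univ
      (fun x _ => hg_nn x)]
    exact ENNReal.ofReal_lt_top
  obtain ⟨C, hC⟩ := isCompact_Icc.exists_bound_of_continuousOn
    (s := Icc (0:ℝ) τ) hψ.continuousOn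
  have hInt : Integrable (Function.uncurry F) (volume.prod volume) := by
    refine Integrable.mono' (g := S.indicator (fun _ => C)) ?_ ?_ (ae_of_all _ fun p => ?_)
    · rw [integrable_indicator_iff hS]
      exact (integrableOn_const_iff enorm_ne_top).2 (Or.inr hvolS)
    · rw [hFeq]
      exact ((hψ.comp continuous_snd).aestronglyMeasurable).indicator hS
    · rw [hFeq]
      by_cases hp : p ∈ S
      · rw [Set.indicator_of_mem hp, Set.indicator_of_mem hp]
        have hp' := (hmemS p).1 hp
        exact hC p.2 ⟨hp'.1.le, (hp'.2.le.trans (hg_le p.1))⟩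
      · rw [Set.indicator_of_notMem hp, Set.indicator_of_notMem hp, norm_zero]
  have hswap : (∫ x : ℝ, ∫ t : ℝ, F x t) = ∫ t : ℝ, ∫ x : ℝ, F x t :=
    integral_integral_swap hInt
  have hinner : ∀ x, (∫ t : ℝ, F x t) = ∫ t in (0:ℝ)..(g x), ψ t := by
    intro x
    simp only [hFdef]
    rw [integral_indicator measurableSet_Ioo, ← integral_Ioc_eq_integral_Ioo,
      intervalIntegral.integral_of_le (hg_nn x)]
  have hmarg : ∀ t : ℝ, (∫ x : ℝ, F x t)
      = (Ioo (0:ℝ) τ).indicator (fun t => ψ t * (volume {x | t < ρ x}).toReal) t := by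
    intro t
    by_cases ht : t ∈ Ioo (0:ℝ) τ
    · have hset : (fun x => F x t) = ({x : ℝ | t < ρ x}).indicator (fun _ => ψ t) := by
        funext x
        simp only [hFdef]
        by_cases hx : t < ρ x
        · rw [Set.indicator_of_mem (show t ∈ Ioo 0 (g x) from Set.mem_Ioo.2 ⟨ht.1, lt_min hx ht.2⟩),
            Set.indicator_of_mem (show x ∈ {x : ℝ | t < ρ x} from hx)]
        · rw [Set.indicator_of_notMem
            (fun hmem => hx (lt_of_lt_of_le (Set.mem_Ioo.1 hmem).2 (min_le_left _ _)))]
          exact (Set.indicator_of_notMem hx (fun _ => ψ t)).symm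
      rw [hset, integral_indicator_const _ (measurableSet_lt measurable_const hρm),
        Set.indicator_of_mem ht, smul_eq_mul, mul_comm]
      rfl
    · have hset : (fun x => F x t) = fun _ => (0:ℝ) := by
        funext x
        simp only [hFdef]
        refine Set.indicator_of_notMem ?_ ψ
        intro hmem
        rcases Set.mem_Ioo.1 hmem with ⟨h1, h2⟩
        exact ht ⟨h1, lt_of_lt_of_le h2 (hg_le x)⟩
      rw [hset, integral_zero, Set.indicator_of_notMem ht]
  have hmargint : Integrable
      (fun t => (Ioo (0:ℝ) τ).indicator (fun t => ψ t * (volume {x | t < ρ x}).toReal) t) := by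
    have := hInt.integral_prod_right
    simp only [Function.uncurry] at this
    have h2 : (fun t : ℝ => ∫ x : ℝ, F x t) =
        fun t => (Ioo (0:ℝ) τ).indicator (fun t => ψ t * (volume {x | t < ρ x}).toReal) t :=
      funext hmarg
    rwa [h2] at this
  constructor
  · exact (integrableOn_Ioc_iff_integrableOn_Ioo enorm_ne_top).2
      ((integrable_indicator_iff measurableSet_Ioo).1 hmargint)
  · calc (∫ x : ℝ, ∫ t in (0:ℝ)..(min (ρ x) τ), ψ t)
        = ∫ x : ℝ, ∫ t : ℝ, F x t := by
          refine integral_congr_ae (ae_of_all _ fun x => ?_)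
          exact (hinner x).symm
      _ = ∫ t : ℝ, ∫ x : ℝ, F x t := hswap
      _ = ∫ t : ℝ, (Ioo (0:ℝ) τ).indicator
            (fun t => ψ t * (volume {x | t < ρ x}).toReal) t := by
          exact integral_congr_ae (ae_of_all _ hmarg)
      _ = ∫ t in Ioo (0:ℝ) τ, ψ t * (volume {x | t < ρ x}).toReal :=
          integral_indicator measurableSet_Ioo
      _ = ∫ t in Ioc (0:ℝ) τ, ψ t * (volume {x | t < ρ x}).toReal :=
          (integral_Ioc_eq_integral_Ioo).symm


/-- Lemma 6.5 (internal-energy part): the internal energy in terms of the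
h(s)-representation. -/
theorem stmt_17 (ρ : ℝ → ℝ) (hρm : Measurable ρ) (hρnn : ∀ x : ℝ, 0 ≤ ρ x)
    (hρint : Integrable ρ) (hmass : (∫ x : ℝ, ρ x) = 1)
    (h : ℝ → ℝ) (hhnn : ∀ s ∈ Icc (0:ℝ) 1, 0 ≤ h s)
    (hrep : ∀ s ∈ Icc (0:ℝ) 1, (∫ x : ℝ, min (ρ x) (h s)) = s)
    (Φ Φ' : ℝ → ℝ)
    (hΦdiff : ∀ x ∈ Ici (0:ℝ), HasDerivWithinAt Φ (Φ' x) (Ici 0) x)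
    (hΦ'cont : ContinuousOn Φ' (Ici 0))
    (hΦ0 : Φ 0 = 0) :
    ∫ x : ℝ, Φ (ρ x) = ∫ s in (0:ℝ)..1, Φ' (h s) := by
  have h1mem : (1:ℝ) ∈ Icc (0:ℝ) 1 := ⟨zero_le_one, le_refl 1⟩
  have hτ₁ : 0 ≤ h 1 := hhnn 1 h1mem
  have hminint : ∀ u : ℝ, 0 ≤ u → Integrable (fun x => min (ρ x) u) := by
    intro u hu
    refine hρint.mono (hρm.min measurable_const).aestronglyMeasurable (ae_of_all _ fun x => ?_)
    rw [Real.norm_eq_abs, Real.norm_eq_abs, abs_of_nonneg (le_min (hρnn x) hu),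
      abs_of_nonneg (hρnn x)]
    exact min_le_left _ _
  have hGmono : ∀ a b : ℝ, 0 ≤ a → a ≤ b →
      (∫ x : ℝ, min (ρ x) a) ≤ ∫ x : ℝ, min (ρ x) b := fun a b ha hab =>
    integral_mono (hminint a ha) (hminint b (ha.trans hab))
      (fun x => min_le_min (le_refl _) hab)
  have hG1 : (∫ x : ℝ, min (ρ x) (h 1)) = 1 := hrep 1 h1mem
  obtain ⟨Φ'', hΦ''def⟩ : ∃ f : ℝ → ℝ, f = fun t => Φ' (max t 0) := ⟨_, rfl⟩
  have hΦ''c : Continuous Φ'' := by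
    rw [hΦ''def]
    exact hΦ'cont.comp_continuous (continuous_id.max continuous_const)
      (fun t => le_max_right t 0)
  have hΦ''eq : ∀ t : ℝ, 0 ≤ t → Φ'' t = Φ' t := by
    intro t ht
    rw [hΦ''def]
    simp only [max_eq_left ht]
  have hΦ''d : ∀ x ∈ Ici (0:ℝ), HasDerivWithinAt Φ (Φ'' x) (Ici 0) x := by
    intro x hx
    rw [hΦ''eq x hx]
    exact hΦdiff x hx
  have hfub := aux_fub ρ hρm hρnn hρint (h 1) hτ₁ Φ'' hΦ''c
  have hGm : ∀ u : ℝ, 0 ≤ u →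
      (∫ x : ℝ, min (ρ x) u) = ∫ t in Ioc (0:ℝ) u, (volume {x | t < ρ x}).toReal := by
    intro u hu
    have := (aux_fub ρ hρm hρnn hρint u hu (fun _ => (1:ℝ)) continuous_const).2
    simpa using this
  have hmint : IntegrableOn (fun t => (volume {x | t < ρ x}).toReal) (Ioc (0:ℝ) (h 1)) := by
    have := (aux_fub ρ hρm hρnn hρint (h 1) hτ₁ (fun _ => (1:ℝ)) continuous_const).1
    simpa using this
  -- left-hand side
  have hae : (fun x => min (ρ x) (h 1)) =ᵐ[volume] ρ := by
    have hsub : Integrable (fun x => ρ x - min (ρ x) (h 1)) :=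
      hρint.sub (hminint (h 1) hτ₁)
    have h0 : (∫ x : ℝ, (ρ x - min (ρ x) (h 1))) = 0 := by
      rw [integral_sub hρint (hminint (h 1) hτ₁), hmass, hG1, sub_self]
    have h2 := (integral_eq_zero_iff_of_nonneg
      (fun x => sub_nonneg.2 (min_le_left (ρ x) (h 1))) hsub).1 h0
    filter_upwards [h2] with x hx
    have hx' : ρ x - min (ρ x) (h 1) = 0 := hx
    linarith
  have hLHS : (∫ x : ℝ, Φ (ρ x))
      = ∫ t in Ioc (0:ℝ) (h 1), Φ'' t * (volume {x | t < ρ x}).toReal := by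
    rw [← hfub.2]
    refine integral_congr_ae ?_
    filter_upwards [hae] with x hx
    rw [aux_ftc Φ Φ'' hΦ''c hΦ''d (min (ρ x) (h 1)) (le_min (hρnn x) hτ₁), hΦ0, sub_zero,
      hx]
  -- monotonicity of h on [0,1]
  have hmonoOn : MonotoneOn h (Icc (0:ℝ) 1) := by
    intro s1 hs1 s2 hs2 h12
    rcases eq_or_lt_of_le h12 with rfl | hlt
    · exact le_refl _
    by_contra hcon
    push_neg at hcon
    have := hGmono (h s2) (h s1) (hhnn s2 hs2) hcon.le
    rw [hrep s2 hs2, hrep s1 hs1] at this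
    linarith
  obtain ⟨H, hHdef⟩ : ∃ H : ℝ → ℝ, H = fun s => h (min (max s 0) 1) := ⟨_, rfl⟩
  have hclampmem : ∀ s : ℝ, min (max s 0) 1 ∈ Icc (0:ℝ) 1 :=
    fun s => ⟨le_min (le_max_right s 0) zero_le_one, min_le_right _ _⟩
  have hHmono : Monotone H := by
    rw [hHdef]
    intro a b hab
    exact hmonoOn (hclampmem a) (hclampmem b)
      (min_le_min (max_le_max hab (le_refl 0)) (le_refl 1))
  have hHmeas : Measurable H := hHmono.measurable
  have hHeq : ∀ s ∈ Ioc (0:ℝ) 1, H s = h s := by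
    intro s hs
    rw [hHdef]
    simp only []
    rw [max_eq_left hs.1.le, min_eq_left hs.2]
  have hHnn : ∀ s : ℝ, 0 ≤ H s := fun s => by
    rw [hHdef]; exact hhnn _ (hclampmem s)
  haveI inst1 : IsFiniteMeasure (volume.restrict (Ioc (0:ℝ) 1)) := by
    constructor
    rw [Measure.restrict_apply_univ, Real.volume_Ioc]
    exact ENNReal.ofReal_lt_top
  haveI inst2 : IsFiniteMeasure ((volume.restrict (Ioc (0:ℝ) 1)).map H) := by
    constructor
    rw [Measure.map_apply hHmeas MeasurableSet.univ, Set.preimage_univ]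
    exact measure_lt_top _ _
  -- CDF of the pushforward measure
  have hν : ∀ τ : ℝ, ((volume.restrict (Ioc (0:ℝ) 1)).map H) (Iic τ)
      = ENNReal.ofReal (∫ t in Ioc (0:ℝ) (min (h 1) τ), (volume {x | t < ρ x}).toReal) := by
    intro τ
    rw [Measure.map_apply hHmeas measurableSet_Iic,
      Measure.restrict_apply (hHmeas measurableSet_Iic)]
    rcases lt_or_ge τ 0 with hτneg | hτ0
    · have he : H ⁻¹' Iic τ ∩ Ioc 0 1 = (∅ : Set ℝ) := by
        ext s
        simp only [mem_inter_iff, mem_preimage, mem_Iic, mem_empty_iff_false, iff_false,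
          not_and]
        intro hs1
        exact absurd (le_trans (hHnn s) hs1) (not_le.2 hτneg)
      have he2 : Ioc (0:ℝ) (min (h 1) τ) = ∅ :=
        Ioc_eq_empty (not_lt.2 (le_of_lt (lt_of_le_of_lt (min_le_right (h 1) τ) hτneg)))
      rw [he, he2, measure_empty]
      simp
    · have hrval : (∫ t in Ioc (0:ℝ) (min (h 1) τ), (volume {x | t < ρ x}).toReal)
          = min (∫ x : ℝ, min (ρ x) τ) 1 := by
        rcases le_total τ (h 1) with hc | hc
        · have hle : (∫ x : ℝ, min (ρ x) τ) ≤ 1 := by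
            rw [← hG1]
            exact hGmono τ (h 1) hτ0 hc
          rw [min_eq_right hc, ← hGm τ hτ0, min_eq_left hle]
        · have hle : (1:ℝ) ≤ ∫ x : ℝ, min (ρ x) τ := by
            rw [← hG1]
            exact hGmono (h 1) τ hτ₁ hc
          rw [min_eq_left hc, ← hGm (h 1) hτ₁, hG1, min_eq_right hle]
      rw [hrval]
      apply le_antisymm
      · have hsub : H ⁻¹' Iic τ ∩ Ioc 0 1 ⊆ Ioc 0 (min (∫ x : ℝ, min (ρ x) τ) 1) := by
          rintro s ⟨hs1, hs2⟩
          have hhs : h s ≤ τ := by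
            rw [← hHeq s hs2]
            exact hs1
          have hmem : s ∈ Icc (0:ℝ) 1 := ⟨hs2.1.le, hs2.2⟩
          have hsle : s ≤ ∫ x : ℝ, min (ρ x) τ := by
            rw [← hrep s hmem]
            exact hGmono (h s) τ (hhnn s hmem) hhs
          exact ⟨hs2.1, le_min hsle hs2.2⟩
        calc volume (H ⁻¹' Iic τ ∩ Ioc 0 1)
            ≤ volume (Ioc 0 (min (∫ x : ℝ, min (ρ x) τ) 1)) := measure_mono hsub
          _ = ENNReal.ofReal (min (∫ x : ℝ, min (ρ x) τ) 1) := by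
              rw [Real.volume_Ioc, sub_zero]
      · have hsub : Ioo (0:ℝ) (min (∫ x : ℝ, min (ρ x) τ) 1) ⊆ H ⁻¹' Iic τ ∩ Ioc 0 1 := by
          rintro s ⟨hs0, hs1⟩
          have hsle1 : s < 1 := lt_of_lt_of_le hs1 (min_le_right _ _)
          have hsG : s < ∫ x : ℝ, min (ρ x) τ := lt_of_lt_of_le hs1 (min_le_left _ _)
          have hs01 : s ∈ Ioc (0:ℝ) 1 := ⟨hs0, hsle1.le⟩
          refine ⟨?_, hs01⟩
          rw [mem_preimage, mem_Iic, hHeq s hs01]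
          by_contra hcon
          push_neg at hcon
          have := hGmono τ (h s) hτ0 hcon.le
          rw [hrep s ⟨hs0.le, hsle1.le⟩] at this
          linarith
        calc ENNReal.ofReal (min (∫ x : ℝ, min (ρ x) τ) 1)
            = volume (Ioo (0:ℝ) (min (∫ x : ℝ, min (ρ x) τ) 1)) := by
              rw [Real.volume_Ioo, sub_zero]
          _ ≤ volume (H ⁻¹' Iic τ ∩ Ioc 0 1) := measure_mono hsub
  -- the density measure
  have hm_meas : Measurable (fun t : ℝ => (volume {x | t < ρ x}).toReal) :=
    Measurable.ennreal_toReal (Antitone.measurable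
      (fun a b hab => measure_mono (fun x hx => lt_of_le_of_lt hab hx)))
  obtain ⟨f, hfdef⟩ : ∃ f : ℝ → NNReal, f = fun t =>
      (Ioc (0:ℝ) (h 1)).indicator (fun t => Real.toNNReal ((volume {x | t < ρ x}).toReal)) t :=
    ⟨_, rfl⟩
  have hf_meas : Measurable f := by
    rw [hfdef]
    exact (measurable_real_toNNReal.comp hm_meas).indicator measurableSet_Ioc
  have hcoe : ∀ t : ℝ, ((f t : NNReal) : ENNReal)
      = (Ioc (0:ℝ) (h 1)).indicator
        (fun t => ENNReal.ofReal ((volume {x | t < ρ x}).toReal)) t := by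
    intro t
    simp only [hfdef]
    by_cases h' : t ∈ Ioc (0:ℝ) (h 1)
    · rw [Set.indicator_of_mem h', Set.indicator_of_mem h']
      rfl
    · rw [Set.indicator_of_notMem h', Set.indicator_of_notMem h']
      rfl
  have hμden : ∀ τ : ℝ, (volume.withDensity (fun t => ((f t : NNReal) : ENNReal))) (Iic τ)
      = ENNReal.ofReal (∫ t in Ioc (0:ℝ) (min (h 1) τ), (volume {x | t < ρ x}).toReal) := by
    intro τ
    rw [withDensity_apply _ measurableSet_Iic]
    have hint : IntegrableOn (fun t => (volume {x | t < ρ x}).toReal)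
        (Ioc (0:ℝ) (min (h 1) τ)) :=
      hmint.mono_set (Ioc_subset_Ioc_right (min_le_left _ _))
    calc ∫⁻ t in Iic τ, ((f t : NNReal) : ENNReal)
        = ∫⁻ t in Iic τ, (Ioc (0:ℝ) (h 1)).indicator
            (fun t => ENNReal.ofReal ((volume {x | t < ρ x}).toReal)) t :=
          lintegral_congr hcoe
      _ = ∫⁻ t in Ioc (0:ℝ) (h 1), ENNReal.ofReal ((volume {x | t < ρ x}).toReal)
            ∂(volume.restrict (Iic τ)) := lintegral_indicator measurableSet_Ioc _
      _ = ∫⁻ t in Ioc (0:ℝ) (h 1) ∩ Iic τ,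
            ENNReal.ofReal ((volume {x | t < ρ x}).toReal) := by
          rw [Measure.restrict_restrict measurableSet_Ioc]
      _ = ∫⁻ t in Ioc (0:ℝ) (min (h 1) τ),
            ENNReal.ofReal ((volume {x | t < ρ x}).toReal) := by
          rw [Ioc_inter_Iic]
      _ = ENNReal.ofReal (∫ t in Ioc (0:ℝ) (min (h 1) τ),
            (volume {x | t < ρ x}).toReal) :=
          (ofReal_integral_eq_lintegral_ofReal hint
            (ae_of_all _ fun t => ENNReal.toReal_nonneg)).symm
  have hmeasure_eq : (volume.restrict (Ioc (0:ℝ) 1)).map H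
      = volume.withDensity (fun t => ((f t : NNReal) : ENNReal)) :=
    Measure.ext_of_Iic _ _ (fun τ => (hν τ).trans (hμden τ).symm)
  -- right-hand side
  have hRHS : (∫ s in (0:ℝ)..1, Φ' (h s))
      = ∫ t in Ioc (0:ℝ) (h 1), Φ'' t * (volume {x | t < ρ x}).toReal := by
    rw [intervalIntegral.integral_of_le zero_le_one]
    have s1 : (∫ s in Ioc (0:ℝ) 1, Φ' (h s)) = ∫ s in Ioc (0:ℝ) 1, Φ'' (H s) := by
      refine setIntegral_congr_fun measurableSet_Ioc (fun s hs => ?_)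
      rw [hHeq s hs, hΦ''eq (h s) (hhnn s ⟨hs.1.le, hs.2⟩)]
    have s2 : (∫ s in Ioc (0:ℝ) 1, Φ'' (H s))
        = ∫ t, Φ'' t ∂((volume.restrict (Ioc (0:ℝ) 1)).map H) :=
      (integral_map hHmeas.aemeasurable hΦ''c.aestronglyMeasurable).symm
    rw [s1, s2, hmeasure_eq, integral_withDensity_eq_integral_smul hf_meas]
    have s3 : (fun t => f t • Φ'' t)
        = (Ioc (0:ℝ) (h 1)).indicator
          (fun t => Φ'' t * (volume {x | t < ρ x}).toReal) := by
      funext t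
      simp only [hfdef]
      by_cases h' : t ∈ Ioc (0:ℝ) (h 1)
      · rw [Set.indicator_of_mem h', Set.indicator_of_mem h']
        rw [NNReal.smul_def, Real.coe_toNNReal _ ENNReal.toReal_nonneg, smul_eq_mul, mul_comm]
      · rw [Set.indicator_of_notMem h', Set.indicator_of_notMem h', zero_smul]
    rw [s3, integral_indicator measurableSet_Ioc]
  rw [hLHS, hRHS]
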